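/- Let (x^t) be a sequence in a normed space E, (γ_t) and (R_t) real sequences, and let θ > 0, h₀ ∈ ℝ, M ≥ 0, and T̃ ∈ ℕ. Suppose: γ_t ≥ h₀ for all t; R_t ≥ 0 for all t ≥ T̃; the partial sums Σ_{t=T̃}^{T−1} R_t ≤ M for all T > T̃; and the descent inequality γ_{t+1} − γ_t ≤ −θ·‖x^{t+1} − x^t‖² + R_t holds for all t ≥ T̃. Then for every T > T̃ there exists t with T̃ ≤ t ≤ T − 1 such that ‖x^{t+1} − x^t‖² ≤ (γ_{T̃} − h₀ + M)/(θ·(T − T̃)); consequently there is a subsequence (t_j) with ‖x^{t_j+1} − x^{t_j}‖ = O(t_j^{−1/2}) as t_j → ∞. -/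

import Mathlib

lemma telescope_Ico (f : ℕ → ℝ) {m n : ℕ} (h : m ≤ n) :
    ∑ t ∈ Finset.Ico m n, (f (t + 1) - f t) = f n - f m := by
  induction n, h using Nat.le_induction with
  | base => simp
  | succ n hn ih => rw [Finset.sum_Ico_succ_top hn, ih]; ring

/-- From the descent inequality `γ_{t+1} - γ_t ≤ -θ‖x^{t+1} - x^t‖² + R_t` (for `t ≥ T̃`)
with lower-bounded `γ` and summable nonnegative residuals `R_t`, each window `[T̃, T)`
contains an index with small squared step, and consequently there is a subsequence along
which `‖x^{t_j+1} - x^{t_j}‖ = O(t_j^{-1/2})`. -/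
theorem stmt_16 {E : Type*} [NormedAddCommGroup E]
    (x : ℕ → E) (γ R : ℕ → ℝ) (θ h₀ M : ℝ) (T₀ : ℕ)
    (hθ : 0 < θ) (hM : 0 ≤ M)
    (hγ : ∀ t, h₀ ≤ γ t)
    (hR : ∀ t, T₀ ≤ t → 0 ≤ R t)
    (hRsum : ∀ T, T₀ < T → ∑ t ∈ Finset.Ico T₀ T, R t ≤ M)
    (hdesc : ∀ t, T₀ ≤ t →
      γ (t + 1) - γ t ≤ -θ * ‖x (t + 1) - x t‖ ^ 2 + R t) :
    (∀ T, T₀ < T → ∃ t, T₀ ≤ t ∧ t < T ∧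
        ‖x (t + 1) - x t‖ ^ 2 ≤ (γ T₀ - h₀ + M) / (θ * ((T : ℝ) - (T₀ : ℝ))))
    ∧ ∃ φ : ℕ → ℕ, StrictMono φ ∧ (∀ j, 1 ≤ φ j ∧ T₀ ≤ φ j) ∧
        ∃ C : ℝ, 0 < C ∧
          ∀ j, ‖x (φ j + 1) - x (φ j)‖ ≤ C * ((φ j : ℝ)) ^ (-(1 : ℝ) / 2) := by
  set f : ℕ → ℝ := fun t => ‖x (t + 1) - x t‖ ^ 2 with hf
  have hfnn : ∀ t, 0 ≤ f t := fun t => sq_nonneg _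
  -- key summed inequality over a window [S, T)
  have hsum : ∀ S T : ℕ, T₀ ≤ S → S ≤ T →
      θ * ∑ t ∈ Finset.Ico S T, f t ≤ γ S - γ T + ∑ t ∈ Finset.Ico S T, R t := by
    intro S T hS hST
    have h1 : ∑ t ∈ Finset.Ico S T, (γ (t + 1) - γ t) ≤
        ∑ t ∈ Finset.Ico S T, (-θ * f t + R t) := by
      apply Finset.sum_le_sum
      intro t ht
      exact hdesc t (hS.trans (Finset.mem_Ico.mp ht).1)
    rw [telescope_Ico γ hST, Finset.sum_add_distrib] at h1
    have h2 : ∑ t ∈ Finset.Ico S T, (-θ * f t) = -(θ * ∑ t ∈ Finset.Ico S T, f t) := by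
      rw [Finset.mul_sum, ← Finset.sum_neg_distrib]
      exact Finset.sum_congr rfl fun t _ => by ring
    rw [h2] at h1
    linarith
  -- residual sums over subwindows are ≤ M
  have hRsub : ∀ S T : ℕ, T₀ ≤ S → S < T → ∑ t ∈ Finset.Ico S T, R t ≤ M := by
    intro S T hS hST
    have h1 : ∑ t ∈ Finset.Ico S T, R t ≤ ∑ t ∈ Finset.Ico T₀ T, R t := by
      apply Finset.sum_le_sum_of_subset_of_nonneg
      · exact Finset.Ico_subset_Ico hS le_rfl
      · intro i hi _; exact hR i (Finset.mem_Ico.mp hi).1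
    exact h1.trans (hRsum T (lt_of_le_of_lt hS hST))
  -- γ stays bounded above: γ S ≤ γ T₀ + M for S ≥ T₀
  have hγub : ∀ S, T₀ ≤ S → γ S ≤ γ T₀ + M := by
    intro S hS
    rcases eq_or_lt_of_le hS with h | h
    · subst h; linarith
    have h1 := hsum T₀ S le_rfl hS
    have h2 := hRsub T₀ S le_rfl h
    have h3 : 0 ≤ θ * ∑ t ∈ Finset.Ico T₀ S, f t :=
      mul_nonneg hθ.le (Finset.sum_nonneg fun t _ => hfnn t)
    linarith
  -- min ≤ average in any window
  have hmin : ∀ S T : ℕ, T₀ ≤ S → S < T → ∃ t, S ≤ t ∧ t < T ∧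
      f t ≤ (γ S - h₀ + M) / (θ * ((T : ℝ) - (S : ℝ))) := by
    intro S T hS hST
    have hcard : (Finset.Ico S T).card = T - S := Nat.card_Ico S T
    have hne : (Finset.Ico S T).Nonempty := by
      rw [Finset.nonempty_Ico]; exact hST
    have hTS : (0 : ℝ) < (T : ℝ) - (S : ℝ) := by
      have := (Nat.cast_lt (α := ℝ)).2 hST
      linarith
    set K : ℝ := γ S - h₀ + M with hK
    set c : ℝ := K / (θ * ((T : ℝ) - (S : ℝ))) with hc
    have hcardR : ((Finset.Ico S T).card : ℝ) = (T : ℝ) - (S : ℝ) := by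
      rw [hcard, Nat.cast_sub hST.le]
    have hfK : θ * ∑ t ∈ Finset.Ico S T, f t ≤ K := by
      have h1 := hsum S T hS hST.le
      have h2 := hRsub S T hS hST
      have h3 := hγ T
      linarith
    have hsumc : ∑ t ∈ Finset.Ico S T, f t ≤ ∑ t ∈ Finset.Ico S T, (fun _ => c) t := by
      rw [Finset.sum_const, nsmul_eq_mul, hcardR]
      have heq : ((T : ℝ) - (S : ℝ)) * c = K / θ := by
        rw [hc]; field_simp
      rw [heq, le_div_iff₀ hθ, mul_comm]
      exact hfK
    obtain ⟨t, ht, hle⟩ := Finset.exists_le_of_sum_le hne hsumc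
    rw [Finset.mem_Ico] at ht
    exact ⟨t, ht.1, ht.2, hle⟩
  constructor
  · intro T hT
    obtain ⟨t, h1, h2, h3⟩ := hmin T₀ T le_rfl hT
    exact ⟨t, h1, h2, h3⟩
  -- second part
  · set K : ℝ := γ T₀ - h₀ + 2 * M with hK
    have hK0 : 0 ≤ K := by have := hγ T₀; rw [hK]; linarith
    set B : ℝ := 2 * K / θ with hB
    have hB0 : 0 ≤ B := by positivity
    set S₀ : ℕ := max T₀ 1 with hS₀
    -- key step: for any S ≥ S₀, find t ∈ [S, 2S) with f t ≤ B / t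
    have key : ∀ S : ℕ, S₀ ≤ S → ∃ t, S ≤ t ∧ f t ≤ B / (t : ℝ) := by
      intro S hS
      have hS1 : 1 ≤ S := le_trans (le_max_right _ _) hS
      have hST₀ : T₀ ≤ S := le_trans (le_max_left _ _) hS
      have hSlt : S < 2 * S := by omega
      obtain ⟨t, ht1, ht2, ht3⟩ := hmin S (2 * S) hST₀ hSlt
      refine ⟨t, ht1, ?_⟩
      have hSpos : (0 : ℝ) < (S : ℝ) := by exact_mod_cast hS1
      have htpos : (0 : ℝ) < (t : ℝ) := lt_of_lt_of_le hSpos (by exact_mod_cast ht1)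
      have hTS : ((2 * S : ℕ) : ℝ) - (S : ℝ) = (S : ℝ) := by push_cast; ring
      rw [hTS] at ht3
      have hKS : γ S - h₀ + M ≤ K := by
        have := hγub S hST₀; rw [hK]; linarith
      have h4 : (γ S - h₀ + M) / (θ * (S : ℝ)) ≤ K / (θ * (S : ℝ)) :=
        div_le_div_of_nonneg_right hKS (by positivity) |>.trans_eq rfl
      have h5 : K / (θ * (S : ℝ)) ≤ B / (t : ℝ) := by
        rw [hB, div_le_div_iff₀ (by positivity) htpos]
        have htlt : (t : ℝ) < 2 * (S : ℝ) := by
          have : (t : ℝ) < ((2 * S : ℕ) : ℝ) := by exact_mod_cast ht2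
          push_cast at this; linarith
        have : K * (t : ℝ) ≤ K * (2 * (S : ℝ)) :=
          mul_le_mul_of_nonneg_left htlt.le hK0
        calc K * (t : ℝ) ≤ 2 * K * (S : ℝ) := by linarith
          _ = 2 * K / θ * (θ * (S : ℝ)) := by field_simp
      exact ht3.trans (h4.trans h5)
    -- build subsequence recursively
    have hS₀S₀ : S₀ ≤ S₀ := le_rfl
    let next : ℕ → ℕ := fun S =>
      if h : S₀ ≤ S then Classical.choose (key S h) else 0
    have hnext : ∀ S (h : S₀ ≤ S), S ≤ next S ∧ f (next S) ≤ B / ((next S : ℝ)) := by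
      intro S h
      simp only [next, dif_pos h]
      exact ⟨(Classical.choose_spec (key S h)).1, (Classical.choose_spec (key S h)).2⟩
    let φ : ℕ → ℕ := fun j => Nat.rec (next S₀) (fun _ prev => next (prev + 1)) j
    have hφ0 : φ 0 = next S₀ := rfl
    have hφsucc : ∀ j, φ (j + 1) = next (φ j + 1) := fun j => rfl
    have hφge : ∀ j, S₀ ≤ φ j := by
      intro j
      induction j with
      | zero => rw [hφ0]; exact (hnext S₀ le_rfl).1
      | succ j ih =>
        rw [hφsucc]
        have h1 : S₀ ≤ φ j + 1 := le_trans ih (Nat.le_succ _)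
        exact le_trans h1 (hnext _ h1).1
    have hφbound : ∀ j, f (φ j) ≤ B / (Nat.cast (φ j) : ℝ) := by
      intro j
      cases j with
      | zero => rw [hφ0]; exact (hnext S₀ le_rfl).2
      | succ j =>
        rw [hφsucc]
        have h1 : S₀ ≤ φ j + 1 := le_trans (hφge j) (Nat.le_succ _)
        exact (hnext _ h1).2
    have hφmono : StrictMono φ := by
      apply strictMono_nat_of_lt_succ
      intro j
      rw [hφsucc]
      have h1 : S₀ ≤ φ j + 1 := le_trans (hφge j) (Nat.le_succ _)
      exact lt_of_lt_of_le (Nat.lt_succ_self _) (hnext _ h1).1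
    refine ⟨φ, hφmono, fun j => ⟨le_trans (le_max_right _ _) (hφge j),
      le_trans (le_max_left _ _) (hφge j)⟩, Real.sqrt B + 1, by positivity, ?_⟩
    intro j
    have h1 : 1 ≤ φ j := le_trans (le_max_right _ _) (hφge j)
    have hφpos : (0 : ℝ) < (Nat.cast (φ j) : ℝ) := by exact_mod_cast h1
    have hb := hφbound j
    have hnorm : ‖x (φ j + 1) - x (φ j)‖ ≤ Real.sqrt (B / (Nat.cast (φ j) : ℝ)) := by
      rw [← Real.sqrt_sq (norm_nonneg _)]
      exact Real.sqrt_le_sqrt hb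
    have hrpow : ((Nat.cast (φ j) : ℝ)) ^ (-(1 : ℝ) / 2) = (Real.sqrt (Nat.cast (φ j) : ℝ))⁻¹ := by
      rw [show (-(1 : ℝ) / 2) = -(1 / 2 : ℝ) by ring, Real.rpow_neg hφpos.le,
        ← Real.sqrt_eq_rpow]
    have hsq : Real.sqrt (B / (Nat.cast (φ j) : ℝ)) = Real.sqrt B * (Real.sqrt (Nat.cast (φ j) : ℝ))⁻¹ := by
      rw [Real.sqrt_div hB0, div_eq_mul_inv]
    have hinv : (0 : ℝ) ≤ (Real.sqrt (Nat.cast (φ j) : ℝ))⁻¹ := by positivity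
    calc ‖x (φ j + 1) - x (φ j)‖ ≤ Real.sqrt (B / (Nat.cast (φ j) : ℝ)) := hnorm
      _ = Real.sqrt B * (Real.sqrt (Nat.cast (φ j) : ℝ))⁻¹ := hsq
      _ ≤ (Real.sqrt B + 1) * (Real.sqrt (Nat.cast (φ j) : ℝ))⁻¹ := by
          apply mul_le_mul_of_nonneg_right _ hinv; linarith
      _ = (Real.sqrt B + 1) * ((Nat.cast (φ j) : ℝ)) ^ (-(1 : ℝ) / 2) := by rw [hrpow]
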